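/- Let F_2 be free on x, y and let K = ⟨x, yxy⁻², y²xy⁻¹⟩ ≤ F_2. Then w = x[x,y] satisfies: w is a visible element of F_2, w ∉ K, w² ∈ K, and w² equals x²[t₂⁻¹, t₁] where t₁ = yxy⁻², t₂ = y²xy⁻¹; in particular w² is not a visible element of K, and ⟨w⟩ ∩ K = ⟨w²⟩ is not a retract of K. -/

import Mathlib

/-- `R` is a retract of the ambient group: there is an endomorphism with image `R`
restricting to the identity on `R` (equivalently, an idempotent endomorphism with image `R`). -/
def IsRetract {G : Type*} [Group G] (R : Subgroup G) : Prop :=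
  ∃ r : G →* G, r.range = R ∧ ∀ x ∈ R, r x = x

/-- The subgroup `H` is free of rank `m`. -/
def HasFreeRank {G : Type*} [Group G] (H : Subgroup G) (m : ℕ) : Prop :=
  ∃ φ : FreeGroup (Fin m) →* G, Function.Injective φ ∧ φ.range = H

/-- An element of a (finitely generated free or free abelian) group is *visible* if some
homomorphism to `ℤ` sends it to `1`; equivalently, its image in the abelianization is part
of a basis (has coprime coordinates). -/
def IsVisibleElement {G : Type*} [Group G] (g : G) : Prop :=
  ∃ f : G →* Multiplicative ℤ, f g = Multiplicative.ofAdd 1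

namespace BergmanExample

open scoped commutatorElement

def x : FreeGroup (Fin 2) := FreeGroup.of 0
def y : FreeGroup (Fin 2) := FreeGroup.of 1
def t₁ : FreeGroup (Fin 2) := y * x * y⁻¹ * y⁻¹
def t₂ : FreeGroup (Fin 2) := y * y * x * y⁻¹
def K : Subgroup (FreeGroup (Fin 2)) := Subgroup.closure {x, t₁, t₂}
def w : FreeGroup (Fin 2) := x * ⁅x, y⁆

theorem key : w ^ 2 = x ^ 2 * ⁅t₂⁻¹, t₁⁆ := by
  simp only [w, t₁, t₂, commutatorElement_def, pow_two]
  group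

/- membership of generators -/
theorem hxK : x ∈ K := Subgroup.subset_closure (by simp)
theorem ht₁K : t₁ ∈ K := Subgroup.subset_closure (by simp)
theorem ht₂K : t₂ ∈ K := Subgroup.subset_closure (by simp)

theorem hw2K : w ^ 2 ∈ K := by
  rw [key, commutatorElement_def]
  exact mul_mem (pow_mem hxK 2)
    (mul_mem (mul_mem (mul_mem (inv_mem ht₂K) ht₁K) ht₂K) (inv_mem ht₁K))

def φ₀ : FreeGroup (Fin 2) →* Multiplicative ℤ :=
  FreeGroup.lift ![Multiplicative.ofAdd 1, 1]

theorem φ₀w : φ₀ w = Multiplicative.ofAdd 1 := by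
  simp only [w, x, y, commutatorElement_def, φ₀, map_mul, map_inv, FreeGroup.lift_apply_of]
  decide

theorem vis : IsVisibleElement w := ⟨φ₀, φ₀w⟩

def ψ : FreeGroup (Fin 2) →* Equiv.Perm (Fin 3) :=
  FreeGroup.lift ![Equiv.swap 1 2, finRotate 3]

theorem fix_of_mem : ∀ g ∈ K, ψ g 0 = 0 := by
  intro g hg
  induction hg using Subgroup.closure_induction with
  | mem a ha =>
    rcases ha with h | h | h <;> subst h <;>
      simp only [x, t₁, t₂, y, ψ, map_mul, map_inv, FreeGroup.lift_apply_of] <;> decide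
  | one => simp
  | mul a b _ _ ha hb => rw [map_mul]; simp [Equiv.Perm.mul_apply, hb, ha]
  | inv a _ ha => rw [map_inv]; exact Equiv.Perm.inv_eq_iff_eq.mpr ha.symm

theorem w_not_mem : w ∉ K := by
  intro h
  have h0 := fix_of_mem w h
  rw [show ψ w 0 = 2 by
    simp only [w, x, y, commutatorElement_def, ψ, map_mul, map_inv, FreeGroup.lift_apply_of]
    decide] at h0
  exact absurd h0 (by decide)

/- the element w² as an element of K, written in terms of generators of K -/
theorem key_in_K (h : w ^ 2 ∈ K) :
    (⟨w ^ 2, h⟩ : K) = (⟨x, hxK⟩ : K) ^ 2 * ⁅(⟨t₂, ht₂K⟩ : K)⁻¹, (⟨t₁, ht₁K⟩ : K)⁆ := by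
  ext
  simp only [commutatorElement_def, Subgroup.coe_mul, Subgroup.coe_inv, Subgroup.coe_pow]
  rw [key, commutatorElement_def]

theorem nonvis : ∀ h : w ^ 2 ∈ K, ¬ IsVisibleElement (⟨w ^ 2, h⟩ : K) := by
  rintro h ⟨f, hf⟩
  rw [key_in_K h, map_mul, map_pow, map_commutatorElement,
    commutatorElement_eq_one_iff_mul_comm.mpr (mul_comm _ _), mul_one] at hf
  have : (1 : ℤ) = 2 * Multiplicative.toAdd (f ⟨x, hxK⟩) := by
    have := congrArg Multiplicative.toAdd hf
    simpa [toAdd_pow, two_mul] using this.symm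
  omega

theorem inter_eq : Subgroup.zpowers w ⊓ K = Subgroup.zpowers (w ^ 2) := by
  have hsq : ∀ m : ℤ, (w ^ 2) ^ m = w ^ (2 * m) := by
    intro m
    rw [← zpow_natCast w 2, ← zpow_mul]
    norm_num
  ext g
  constructor
  · rintro ⟨hz, hgK⟩
    obtain ⟨k, hk⟩ := Subgroup.mem_zpowers_iff.mp hz
    rcases Int.even_or_odd k with ⟨m, hm⟩ | ⟨m, hm⟩
    · exact Subgroup.mem_zpowers_iff.mpr ⟨m, by rw [hsq, ← hk]; congr 1; omega⟩
    · exfalso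
      apply w_not_mem
      have : w = g * (w ^ 2) ^ (-m) := by
        rw [← hk, hsq, ← zpow_add, show k + 2 * (-m) = 1 by omega, zpow_one]
      rw [this]
      exact mul_mem hgK (Subgroup.zpow_mem K hw2K (-m))
  · intro hz
    obtain ⟨m, hm⟩ := Subgroup.mem_zpowers_iff.mp hz
    refine ⟨Subgroup.mem_zpowers_iff.mpr ⟨2 * m, by rw [← hsq, hm]⟩, ?_⟩
    rw [← hm]
    exact Subgroup.zpow_mem K hw2K m

theorem not_retract : ¬ IsRetract ((Subgroup.zpowers (w ^ 2)).subgroupOf K) := by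
  rintro ⟨r, hrange, hid⟩
  have hWmem : (⟨w ^ 2, hw2K⟩ : K) ∈ (Subgroup.zpowers (w ^ 2)).subgroupOf K := by
    rw [Subgroup.mem_subgroupOf]; exact Subgroup.mem_zpowers _
  have hφw2 : Multiplicative.toAdd (φ₀ (w ^ 2)) = 2 := by
    rw [map_pow, φ₀w]; decide
  have hval : ∀ g : K, ∃ k : ℤ,
      Multiplicative.toAdd (φ₀ ((r g : K) : FreeGroup (Fin 2))) = 2 * k := by
    intro g
    have hmem : r g ∈ r.range := ⟨g, rfl⟩
    rw [hrange, Subgroup.mem_subgroupOf] at hmem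
    obtain ⟨k, hk⟩ := Subgroup.mem_zpowers_iff.mp hmem
    refine ⟨k, ?_⟩
    rw [← hk, map_zpow, toAdd_zpow, hφw2]
    simp [mul_comm]
  choose val hval using hval
  refine nonvis hw2K ⟨⟨⟨fun g => Multiplicative.ofAdd (val g), ?_⟩, ?_⟩, ?_⟩
  · show Multiplicative.ofAdd (val 1) = 1
    have h1 := hval 1
    rw [map_one r] at h1
    simp only [OneMemClass.coe_one, map_one, toAdd_one] at h1
    have : val 1 = 0 := by omega
    rw [this]; rfl
  · intro a b
    show Multiplicative.ofAdd (val (a * b)) =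
      Multiplicative.ofAdd (val a) * Multiplicative.ofAdd (val b)
    have ha := hval a
    have hb := hval b
    have hab := hval (a * b)
    rw [map_mul r, Subgroup.coe_mul, map_mul, toAdd_mul, ha, hb] at hab
    rw [← ofAdd_add]
    congr 1
    omega
  · show Multiplicative.ofAdd (val ⟨w ^ 2, hw2K⟩) = Multiplicative.ofAdd 1
    have h := hval ⟨w ^ 2, hw2K⟩
    rw [hid _ hWmem] at h
    have h2 : ((⟨w ^ 2, hw2K⟩ : K) : FreeGroup (Fin 2)) = w ^ 2 := rfl
    rw [h2, hφw2] at h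
    congr 1
    omega

theorem bergman_counterexample :
    IsVisibleElement w ∧ w ∉ K ∧ w ^ 2 ∈ K ∧ w ^ 2 = x ^ 2 * ⁅t₂⁻¹, t₁⁆ ∧
      (∀ h : w ^ 2 ∈ K, ¬ IsVisibleElement (⟨w ^ 2, h⟩ : K)) ∧
      Subgroup.zpowers w ⊓ K = Subgroup.zpowers (w ^ 2) ∧
      ¬ IsRetract ((Subgroup.zpowers (w ^ 2)).subgroupOf K) := by
  exact ⟨vis, w_not_mem, hw2K, key, nonvis, inter_eq, not_retract⟩

end BergmanExample
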